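/- Under the SIR-SBM ODE system with initial data in U_0, the limit s_k(∞) = lim_{t→∞} s_k(t) satisfies the implicit equation s_k(∞) = s_k(0) * exp( -(η/(η+γ)) Σ_ℓ W_{ℓk} ( s_ℓ(0) - s_ℓ(∞) + x_ℓ(0) ) ). -/

import Mathlib

open Filter

/-- The SIR-SBM ODE system: `ds_k/dt = -η s_k Σ_ℓ x_ℓ W_{ℓk}`,
`di_k/dt = -γ i_k + η s_k Σ_ℓ x_ℓ W_{ℓk}`, `dx_k/dt = -(η+γ) x_k + η s_k Σ_ℓ x_ℓ W_{ℓk}`,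
holding on `[0,∞)`. -/
def sirODE {K : ℕ} (W : Matrix (Fin K) (Fin K) ℝ) (η γ : ℝ)
    (s i x : ℝ → Fin K → ℝ) : Prop :=
  ∀ k : Fin K, ∀ t ∈ Set.Ici (0 : ℝ),
    HasDerivWithinAt (fun τ => s τ k)
      (-η * s t k * ∑ l, x t l * W l k) (Set.Ici 0) t ∧
    HasDerivWithinAt (fun τ => i τ k)
      (-γ * i t k + η * s t k * ∑ l, x t l * W l k) (Set.Ici 0) t ∧
    HasDerivWithinAt (fun τ => x τ k)
      (-(η + γ) * x t k + η * s t k * ∑ l, x t l * W l k) (Set.Ici 0) t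

/-- The set `U₀ = { y ∈ [0,∞)^{3K} : Σ_k (s_k + i_k) ≤ 1, Σ_k (s_k + x_k) ≤ 2 }`. -/
def inU0 {K : ℕ} (s i x : Fin K → ℝ) : Prop :=
  (∀ k, 0 ≤ s k) ∧ (∀ k, 0 ≤ i k) ∧ (∀ k, 0 ≤ x k) ∧
    (∑ k, (s k + i k)) ≤ 1 ∧ (∑ k, (s k + x k)) ≤ 2

open MeasureTheory Set in
private lemma ftc_deriv (f : ℝ → ℝ) (hf : Continuous f) (t : ℝ) :
    HasDerivAt (fun u => ∫ τ in (0:ℝ)..u, f τ) (f t) t :=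
  intervalIntegral.integral_hasDerivAt_right (hf.intervalIntegrable _ _)
    (hf.stronglyMeasurableAtFilter _ _) hf.continuousAt

open MeasureTheory Set in
private lemma ftc_ici {f g : ℝ → ℝ}
    (hf' : ∀ u ∈ Set.Ici (0:ℝ), HasDerivWithinAt f (g u) (Set.Ici 0) u)
    (hgc : Continuous (fun τ => g (max τ 0))) {t : ℝ} (ht : 0 ≤ t) :
    ∫ τ in (0:ℝ)..t, g (max τ 0) = f t - f 0 := by
  apply intervalIntegral.integral_eq_sub_of_hasDeriv_right_of_le ht
  · exact fun u hu => ((hf' u hu.1).continuousWithinAt).mono (fun z hz => hz.1)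
  · intro u hu
    have h1 : HasDerivWithinAt f (g u) (Set.Ioi u) u :=
      (hf' u hu.1.le).mono (fun z hz => le_trans hu.1.le (le_of_lt hz))
    rw [max_eq_left hu.1.le]
    exact h1
  · exact hgc.intervalIntegrable _ _

open MeasureTheory Set in
/-- For solutions of the SIR-SBM system with initial data in `U₀`, the limit
`s(∞)` satisfies `s_k(∞) = s_k(0) exp(-(η/(η+γ)) Σ_ℓ W_{ℓk}(s_ℓ(0) - s_ℓ(∞) + x_ℓ(0)))`. -/
theorem stmt9 {K : ℕ} (W : Matrix (Fin K) (Fin K) ℝ) (hW : ∀ k l, 0 ≤ W k l)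
    (η γ : ℝ) (hη : 0 < η) (hγ : 0 < γ)
    (s i x : ℝ → Fin K → ℝ) (hODE : sirODE W η γ s i x)
    (h0 : inU0 (s 0) (i 0) (x 0))
    (sInf : Fin K → ℝ) (hlim : ∀ k, Tendsto (fun t => s t k) atTop (nhds (sInf k))) :
    ∀ k : Fin K,
      sInf k = s 0 k *
        Real.exp (-(η / (η + γ)) * ∑ l, W l k * (s 0 l - sInf l + x 0 l)) := by
  have hsd : ∀ k, ∀ t ∈ Set.Ici (0:ℝ), HasDerivWithinAt (fun τ => s τ k)
      (-η * s t k * ∑ l, x t l * W l k) (Set.Ici 0) t := fun k t ht => (hODE k t ht).1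
  have hxd : ∀ k, ∀ t ∈ Set.Ici (0:ℝ), HasDerivWithinAt (fun τ => x τ k)
      (-(η + γ) * x t k + η * s t k * ∑ l, x t l * W l k) (Set.Ici 0) t :=
    fun k t ht => (hODE k t ht).2.2
  have hs0 : ∀ k, 0 ≤ s 0 k := h0.1
  have hx0 : ∀ k, 0 ≤ x 0 k := h0.2.2.1
  have hlam : (0:ℝ) < η + γ := by linarith
  have hsc : ∀ k, Continuous (fun τ => s (max τ 0) k) := fun k =>
    ContinuousOn.comp_continuous (fun t ht => (hsd k t ht).continuousWithinAt)
      (continuous_id.max continuous_const) (fun τ => le_max_right τ 0)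
  have hxc : ∀ k, Continuous (fun τ => x (max τ 0) k) := fun k =>
    ContinuousOn.comp_continuous (fun t ht => (hxd k t ht).continuousWithinAt)
      (continuous_id.max continuous_const) (fun τ => le_max_right τ 0)
  set F : Fin K → ℝ → ℝ := fun l t => ∫ τ in (0:ℝ)..t, x (max τ 0) l with hFdef
  have hFeq : ∀ l t, F l t = ∫ τ in (0:ℝ)..t, x (max τ 0) l := fun l t => rfl
  have hF0 : ∀ l, F l 0 = 0 := fun l => by rw [hFeq, intervalIntegral.integral_same]
  have hFderiv : ∀ l t, HasDerivAt (F l) (x (max t 0) l) t := fun l t => ftc_deriv _ (hxc l) t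
  -- conservation identity
  have hvd : ∀ l, ∀ t ∈ Set.Ici (0:ℝ), HasDerivWithinAt (fun τ => s τ l + x τ l)
      (-(η+γ) * x t l) (Set.Ici 0) t := by
    intro l t ht
    have h := (hsd l t ht).add (hxd l t ht)
    refine h.congr_deriv ?_
    ring
  have hFid : ∀ l, ∀ t ∈ Set.Ici (0:ℝ),
      (η + γ) * F l t = s 0 l + x 0 l - (s t l + x t l) := by
    intro l t ht
    have h1 := ftc_ici (f := fun τ => s τ l + x τ l) (g := fun u => -(η+γ) * x u l)
      (hvd l) (by exact continuous_const.mul (hxc l)) ht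
    simp only [intervalIntegral.integral_const_mul] at h1
    rw [← hFeq] at h1
    linarith
  -- s formula
  have hsForm : ∀ k, ∀ t ∈ Set.Ici (0:ℝ),
      s t k = s 0 k * Real.exp (-(η * ∑ l, W l k * F l t)) := by
    intro k t ht
    have hPd : ∀ u, HasDerivAt (fun τ => η * ∑ l, W l k * F l τ)
        (η * ∑ l, W l k * x (max u 0) l) u := by
      intro u
      have h : HasDerivAt (fun τ => ∑ l, W l k * F l τ) (∑ l, W l k * x (max u 0) l) u :=
        HasDerivAt.fun_sum (fun l _ => (hFderiv l u).const_mul (W l k))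
      exact h.const_mul η
    have hPc : Continuous (fun τ => Real.exp (η * ∑ l, W l k * F l τ)) := by
      apply Real.continuous_exp.comp
      exact continuous_const.mul (continuous_finset_sum _ (fun l _ =>
        continuous_const.mul (continuous_iff_continuousAt.2 (fun u => (hFderiv l u).continuousAt))))
    have hconst := constant_of_has_deriv_right_zero
      (f := fun τ => s τ k * Real.exp (η * ∑ l, W l k * F l τ)) (a := 0) (b := t)
      (ContinuousOn.mul (fun u hu => ((hsd k u hu.1).continuousWithinAt).mono (fun z hz => hz.1))
        hPc.continuousOn)
      (by
        intro u hu
        have h1 : HasDerivWithinAt (fun τ => s τ k) (-η * s u k * ∑ l, x u l * W l k)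
            (Set.Ici u) u := (hsd k u hu.1).mono (fun z hz => le_trans hu.1 hz)
        have h2 : HasDerivAt (fun τ => Real.exp (η * ∑ l, W l k * F l τ))
            (Real.exp (η * ∑ l, W l k * F l u) * (η * ∑ l, W l k * x (max u 0) l)) u :=
          (hPd u).exp
        have h3 := h1.mul h2.hasDerivWithinAt
        refine h3.congr_deriv ?_
        rw [max_eq_left hu.1]
        have hsum : (∑ l, x u l * W l k) = ∑ l, W l k * x u l :=
          Finset.sum_congr rfl (fun l _ => mul_comm _ _)
        rw [hsum]
        ring)
      t ⟨ht, le_refl t⟩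
    change s t k * Real.exp (η * ∑ l, W l k * F l t) = s 0 k * Real.exp (η * ∑ l, W l k * F l 0) at hconst
    have hP0 : (η * ∑ l, W l k * F l 0) = 0 := by
      simp [hF0]
    rw [hP0, Real.exp_zero, mul_one] at hconst
    rw [Real.exp_neg, ← hconst, mul_inv_cancel_right₀ (Real.exp_ne_zero _)]
  have hsnn : ∀ t ∈ Set.Ici (0:ℝ), ∀ k, 0 ≤ s t k := by
    intro t ht k
    rw [hsForm k t ht]
    exact mul_nonneg (hs0 k) (Real.exp_nonneg _)
  -- positivity of x
  have hxnn : ∀ t ∈ Set.Ici (0:ℝ), ∀ k, 0 ≤ x t k := by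
    intro T hT
    set Y : ℝ → Fin K → ℝ := fun τ k => Real.exp ((η + γ) * max τ 0) * x (max τ 0) k with hYdef
    have hYeq : ∀ τ k, Y τ k = Real.exp ((η + γ) * max τ 0) * x (max τ 0) k := fun _ _ => rfl
    have hYc : ∀ k, Continuous (fun τ => Y τ k) := fun k =>
      ((Real.continuous_exp.comp (continuous_const.mul (continuous_id.max continuous_const))).mul
        (hxc k))
    have hyd : ∀ k, ∀ u ∈ Set.Ici (0:ℝ),
        HasDerivWithinAt (fun τ => Real.exp ((η + γ) * τ) * x τ k)
          (η * s u k * ∑ l, (Real.exp ((η + γ) * u) * x u l) * W l k) (Set.Ici 0) u := by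
      intro k u hu
      have he : HasDerivAt (fun τ => Real.exp ((η + γ) * τ)) ((η + γ) * Real.exp ((η + γ) * u)) u := by
        simpa [mul_comm] using ((hasDerivAt_id u).const_mul (η + γ)).exp
      have h := (he.hasDerivWithinAt).mul (hxd k u hu)
      refine h.congr_deriv ?_
      simp only [mul_assoc]
      rw [← Finset.mul_sum]
      ring
    -- bound on s over [0, T]
    obtain ⟨M, hM⟩ := (isCompact_Icc (a := (0:ℝ)) (b := T)).exists_bound_of_continuousOn
      (f := fun τ => ∑ k, |s τ k|)
      (continuousOn_finset_sum _ (fun k _ =>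
        (fun u hu => (((hsd k u hu.1).continuousWithinAt).mono (fun z hz => hz.1)).abs)))
    have hMs : ∀ τ ∈ Set.Icc (0:ℝ) T, ∀ k, s τ k ≤ M := by
      intro τ hτ k
      have h1 : s τ k ≤ |s τ k| := le_abs_self _
      have h2 : |s τ k| ≤ ∑ k', |s τ k'| :=
        Finset.single_le_sum (f := fun k' => |s τ k'|) (fun k' _ => abs_nonneg _) (Finset.mem_univ k)
      have h3 := hM τ hτ
      rw [Real.norm_eq_abs] at h3
      have h4 : (∑ k', |s τ k'|) ≤ abs (∑ k', |s τ k'|) := le_abs_self _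
      linarith
    have hM0 : 0 ≤ M := le_trans (norm_nonneg _) (hM 0 ⟨le_refl 0, hT⟩)
    set C0 : ℝ := η * M * (∑ l, ∑ k', W l k') with hC0def
    have hC0nn : 0 ≤ C0 := by
      apply mul_nonneg (mul_nonneg hη.le hM0)
      exact Finset.sum_nonneg (fun l _ => Finset.sum_nonneg (fun k' _ => hW l k'))
    set φ : ℝ → ℝ := fun τ => ∑ k, max (-(Y τ k)) 0 with hφdef
    have hφeq : ∀ τ, φ τ = ∑ k, max (-(Y τ k)) 0 := fun _ => rfl
    have hφc : Continuous φ := continuous_finset_sum _ (fun k _ =>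
      ((hYc k).neg.max continuous_const))
    have hφnn : ∀ τ, 0 ≤ φ τ := fun τ => Finset.sum_nonneg (fun k _ => le_max_right _ _)
    set Φ : ℝ → ℝ := fun t => ∫ τ in (0:ℝ)..t, φ τ with hΦdef
    have hΦderiv : ∀ u, HasDerivAt Φ (φ u) u := fun u => ftc_deriv _ hφc u
    -- the per-component integral representation
    have hYid : ∀ k, ∀ t ∈ Set.Icc (0:ℝ) T, Y t k = x 0 k +
        ∫ τ in (0:ℝ)..t, (η * s (max τ 0) k * ∑ l, Y τ l * W l k) := by
      intro k t ht
      have h1 := ftc_ici (f := fun τ => Real.exp ((η + γ) * τ) * x τ k)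
        (g := fun u => η * s u k * ∑ l, (Real.exp ((η + γ) * u) * x u l) * W l k)
        (hyd k)
        (by
          apply Continuous.mul (continuous_const.mul (hsc k))
          exact continuous_finset_sum _ (fun l _ => (hYc l).mul continuous_const))
        ht.1
      change (∫ τ in (0:ℝ)..t, η * s (max τ 0) k * ∑ l, (Real.exp ((η + γ) * max τ 0) * x (max τ 0) l) * W l k) = Real.exp ((η + γ) * t) * x t k - Real.exp ((η + γ) * 0) * x 0 k at h1
      have h2 : (∫ τ in (0:ℝ)..t,
          (η * s (max τ 0) k * ∑ l, (Real.exp ((η + γ) * max τ 0) * x (max τ 0) l) * W l k)) =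
          ∫ τ in (0:ℝ)..t, (η * s (max τ 0) k * ∑ l, Y τ l * W l k) := rfl
      rw [h2] at h1
      rw [hYeq, max_eq_left ht.1]
      have h0 : Real.exp ((η + γ) * (0:ℝ)) * x 0 k = x 0 k := by simp
      linarith [h1]
    -- continuity of the per-k integrand H
    have hHc : ∀ k, Continuous (fun τ => η * s (max τ 0) k * ∑ l, max (-(Y τ l)) 0 * W l k) :=
      fun k => (continuous_const.mul (hsc k)).mul (continuous_finset_sum _ (fun l _ =>
        (((hYc l).neg.max continuous_const).mul continuous_const)))
    have hGc : ∀ k, Continuous (fun τ => η * s (max τ 0) k * ∑ l, Y τ l * W l k) :=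
      fun k => (continuous_const.mul (hsc k)).mul (continuous_finset_sum _ (fun l _ =>
        ((hYc l).mul continuous_const)))
    -- key integral inequality
    have hkey : ∀ t ∈ Set.Icc (0:ℝ) T, φ t ≤ C0 * Φ t := by
      intro t ht
      have hk : ∀ k, max (-(Y t k)) 0 ≤
          ∫ τ in (0:ℝ)..t, (η * s (max τ 0) k * ∑ l, max (-(Y τ l)) 0 * W l k) := by
        intro k
        have hHnn : ∀ τ, 0 ≤ η * s (max τ 0) k * ∑ l, max (-(Y τ l)) 0 * W l k := fun τ =>
          mul_nonneg (mul_nonneg hη.le (hsnn _ (le_max_right τ 0) k))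
            (Finset.sum_nonneg (fun l _ => mul_nonneg (le_max_right _ _) (hW l k)))
        refine max_le ?_ (intervalIntegral.integral_nonneg ht.1 (fun τ _ => hHnn τ))
        have h1 := hYid k t ht
        have hGH : ∀ τ ∈ Set.Icc (0:ℝ) t,
            -(η * s (max τ 0) k * ∑ l, Y τ l * W l k) ≤
            η * s (max τ 0) k * ∑ l, max (-(Y τ l)) 0 * W l k := by
          intro τ hτ
          have hsn : 0 ≤ s (max τ 0) k := hsnn _ (le_max_right τ 0) k
          have hstep : ∑ l, (-(Y τ l)) * W l k ≤ ∑ l, max (-(Y τ l)) 0 * W l k :=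
            Finset.sum_le_sum (fun l _ => mul_le_mul_of_nonneg_right (le_max_left _ _) (hW l k))
          have hneg : ∑ l, (-(Y τ l)) * W l k = -(∑ l, Y τ l * W l k) := by
            simp [neg_mul]
          calc -(η * s (max τ 0) k * ∑ l, Y τ l * W l k)
              = η * s (max τ 0) k * ∑ l, (-(Y τ l)) * W l k := by rw [hneg]; ring
            _ ≤ η * s (max τ 0) k * ∑ l, max (-(Y τ l)) 0 * W l k :=
                mul_le_mul_of_nonneg_left hstep (mul_nonneg hη.le hsn)
        have h3 : (∫ τ in (0:ℝ)..t, -(η * s (max τ 0) k * ∑ l, Y τ l * W l k)) ≤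
            ∫ τ in (0:ℝ)..t, (η * s (max τ 0) k * ∑ l, max (-(Y τ l)) 0 * W l k) :=
          intervalIntegral.integral_mono_on ht.1 ((hGc k).neg.intervalIntegrable _ _)
            ((hHc k).intervalIntegrable _ _) hGH
        rw [intervalIntegral.integral_neg] at h3
        have hx0k : -(x 0 k) ≤ 0 := neg_nonpos.2 (hx0 k)
        have : -(Y t k) = -(x 0 k) - ∫ τ in (0:ℝ)..t, (η * s (max τ 0) k * ∑ l, Y τ l * W l k) := by
          rw [h1]; ring
        linarith
      have hsum1 : φ t ≤ ∑ k, ∫ τ in (0:ℝ)..t,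
          (η * s (max τ 0) k * ∑ l, max (-(Y τ l)) 0 * W l k) :=
        Finset.sum_le_sum (fun k _ => hk k)
      have hsum2 : (∑ k, ∫ τ in (0:ℝ)..t,
          (η * s (max τ 0) k * ∑ l, max (-(Y τ l)) 0 * W l k)) =
          ∫ τ in (0:ℝ)..t, ∑ k, (η * s (max τ 0) k * ∑ l, max (-(Y τ l)) 0 * W l k) :=
        (intervalIntegral.integral_finset_sum (fun k _ => (hHc k).intervalIntegrable _ _)).symm
      have hpt : ∀ τ ∈ Set.Icc (0:ℝ) t,
          (∑ k, (η * s (max τ 0) k * ∑ l, max (-(Y τ l)) 0 * W l k)) ≤ C0 * φ τ := by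
        intro τ hτ
        have hmax : max τ 0 = τ := max_eq_left hτ.1
        have hτT : τ ∈ Set.Icc (0:ℝ) T := ⟨hτ.1, le_trans hτ.2 ht.2⟩
        have hswap : (∑ k, (η * s (max τ 0) k * ∑ l, max (-(Y τ l)) 0 * W l k)) =
            ∑ l, max (-(Y τ l)) 0 * ∑ k, (η * s (max τ 0) k * W l k) := by
          simp_rw [Finset.mul_sum]
          rw [Finset.sum_comm]
          exact Finset.sum_congr rfl (fun l _ => Finset.sum_congr rfl (fun k _ => by ring))
        rw [hswap]
        have hcoef : ∀ l, (∑ k, (η * s (max τ 0) k * W l k)) ≤ C0 := by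
          intro l
          have h1 : (∑ k, (η * s (max τ 0) k * W l k)) ≤ ∑ k, (η * M * W l k) :=
            Finset.sum_le_sum (fun k _ => mul_le_mul_of_nonneg_right
              (mul_le_mul_of_nonneg_left (by rw [hmax]; exact hMs τ hτT k) hη.le) (hW l k))
          have h2 : (∑ k, (η * M * W l k)) = η * M * ∑ k, W l k := by
            rw [Finset.mul_sum]
          have h3 : (∑ k, W l k) ≤ ∑ l', ∑ k', W l' k' :=
            Finset.single_le_sum (f := fun l' => ∑ k', W l' k')
              (fun l' _ => Finset.sum_nonneg (fun k' _ => hW l' k')) (Finset.mem_univ l)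
          have h4 : η * M * (∑ k, W l k) ≤ C0 :=
            mul_le_mul_of_nonneg_left h3 (mul_nonneg hη.le hM0)
          linarith
        calc (∑ l, max (-(Y τ l)) 0 * ∑ k, (η * s (max τ 0) k * W l k))
            ≤ ∑ l, max (-(Y τ l)) 0 * C0 :=
              Finset.sum_le_sum (fun l _ =>
                mul_le_mul_of_nonneg_left (hcoef l) (le_max_right _ _))
          _ = C0 * φ τ := by rw [hφeq, Finset.mul_sum]; exact Finset.sum_congr rfl (fun l _ => by ring)
      have hsum3 : (∫ τ in (0:ℝ)..t, ∑ k, (η * s (max τ 0) k * ∑ l, max (-(Y τ l)) 0 * W l k)) ≤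
          ∫ τ in (0:ℝ)..t, C0 * φ τ :=
        intervalIntegral.integral_mono_on ht.1
          ((continuous_finset_sum _ (fun k _ => hHc k)).intervalIntegrable _ _)
          ((continuous_const.mul hφc).intervalIntegrable _ _) hpt
      have hsum4 : (∫ τ in (0:ℝ)..t, C0 * φ τ) = C0 * Φ t := by
        rw [intervalIntegral.integral_const_mul]
      linarith
    -- Gronwall
    have hg := norm_le_gronwallBound_of_norm_deriv_right_le (f := Φ) (f' := φ)
      (δ := 0) (K := C0) (ε := 0) (a := 0) (b := T)
      (fun u _ => (hΦderiv u).continuousAt.continuousWithinAt)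
      (fun u _ => (hΦderiv u).hasDerivWithinAt)
      (by simp [hΦdef, intervalIntegral.integral_same])
      (by
        intro u hu
        rw [Real.norm_eq_abs, Real.norm_eq_abs, abs_of_nonneg (hφnn u), add_zero]
        calc φ u ≤ C0 * Φ u := hkey u ⟨hu.1, hu.2.le⟩
          _ ≤ C0 * |Φ u| := mul_le_mul_of_nonneg_left (le_abs_self _) hC0nn)
    have hΦT := hg T ⟨hT, le_refl T⟩
    rw [gronwallBound_ε0_δ0] at hΦT
    have hΦT0 : Φ T = 0 := by
      have := norm_nonneg (Φ T)
      have h2 : ‖Φ T‖ = 0 := le_antisymm hΦT this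
      exact norm_eq_zero.1 h2
    have hφT : φ T = 0 := by
      have h1 : φ T ≤ C0 * Φ T := hkey T ⟨hT, le_refl T⟩
      rw [hΦT0, mul_zero] at h1
      exact le_antisymm h1 (hφnn T)
    intro k
    have hterm : max (-(Y T k)) 0 = 0 := by
      have := (Finset.sum_eq_zero_iff_of_nonneg (fun k' _ => le_max_right (-(Y T k')) 0)).1
        hφT k (Finset.mem_univ k)
      exact this
    have hYnn : 0 ≤ Y T k := by
      have : -(Y T k) ≤ 0 := by
        by_contra hc
        push_neg at hc
        rw [max_eq_left hc.le] at hterm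
        linarith
      linarith
    rw [hYeq, max_eq_left hT] at hYnn
    exact nonneg_of_mul_nonneg_right hYnn (Real.exp_pos _)
  -- monotonicity and boundedness of F
  have hFdiff : ∀ l a b, F l b - F l a = ∫ τ in a..b, x (max τ 0) l := by
    intro l a b
    rw [hFeq, hFeq, ← intervalIntegral.integral_add_adjacent_intervals
      ((hxc l).intervalIntegrable 0 a) ((hxc l).intervalIntegrable a b)]
    ring
  have hFmono : ∀ l, Monotone (F l) := by
    intro l a b hab
    have h1 := hFdiff l a b
    have h2 : 0 ≤ ∫ τ in a..b, x (max τ 0) l :=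
      intervalIntegral.integral_nonneg hab (fun u _ => hxnn _ (le_max_right u 0) l)
    linarith
  have hFub : ∀ l t, F l t ≤ (s 0 l + x 0 l) / (η + γ) := by
    intro l t
    rcases le_or_gt 0 t with h | h
    · have h1 := hFid l t h
      have hv : 0 ≤ s t l + x t l := add_nonneg (hsnn t h l) (hxnn t h l)
      rw [le_div_iff₀ hlam]
      linarith
    · have h1 : F l t ≤ F l 0 := hFmono l h.le
      have h2 : 0 ≤ (s 0 l + x 0 l) / (η + γ) :=
        div_nonneg (add_nonneg (hs0 l) (hx0 l)) hlam.le
      rw [hF0 l] at h1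
      linarith
  have hFbdd : ∀ l, BddAbove (Set.range (F l)) := fun l =>
    ⟨(s 0 l + x 0 l) / (η + γ), by rintro _ ⟨t, rfl⟩; exact hFub l t⟩
  have hJlim : ∀ l, Tendsto (F l) atTop (nhds (⨆ t, F l t)) := fun l =>
    tendsto_atTop_ciSup (hFmono l) (hFbdd l)
  set J : Fin K → ℝ := fun l => ⨆ t, F l t with hJdef
  have hxlim : ∀ l, Tendsto (fun t => x t l) atTop
      (nhds (s 0 l + x 0 l - (η + γ) * J l - sInf l)) := by
    intro l
    have h1 : Tendsto (fun t => s 0 l + x 0 l - (η + γ) * F l t - s t l) atTop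
        (nhds (s 0 l + x 0 l - (η + γ) * J l - sInf l)) :=
      (tendsto_const_nhds.sub ((hJlim l).const_mul (η + γ))).sub (hlim l)
    apply h1.congr'
    filter_upwards [eventually_ge_atTop (0:ℝ)] with t ht
    have h2 := hFid l t ht
    linarith
  have hLnn : ∀ l, 0 ≤ s 0 l + x 0 l - (η + γ) * J l - sInf l := by
    intro l
    refine ge_of_tendsto (hxlim l) ?_
    filter_upwards [eventually_ge_atTop (0:ℝ)] with t ht
    exact hxnn t ht l
  have hJval : ∀ l, (η + γ) * J l = s 0 l + x 0 l - sInf l := by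
    intro l
    by_contra hne
    have hLpos : 0 < s 0 l + x 0 l - (η + γ) * J l - sInf l := by
      rcases lt_or_eq_of_le (hLnn l) with h | h
      · exact h
      · exfalso; apply hne; linarith
    set L : ℝ := s 0 l + x 0 l - (η + γ) * J l - sInf l with hLdef
    have hev : ∀ᶠ t in atTop, L / 2 < x t l :=
      (hxlim l).eventually (lt_mem_nhds (by linarith))
    obtain ⟨T0, hT0⟩ := eventually_atTop.1 (hev.and (eventually_ge_atTop (0:ℝ)))
    obtain ⟨n, hn⟩ := exists_nat_gt (((s 0 l + x 0 l) / (η + γ) - F l T0) / (L / 2))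
    have hT0n : T0 ≤ T0 + (n:ℝ) := by
      have := Nat.cast_nonneg (α := ℝ) n
      linarith
    have hlin : (n:ℝ) * (L / 2) ≤ F l (T0 + n) - F l T0 := by
      rw [hFdiff l T0 (T0 + n)]
      have hc := intervalIntegral.integral_mono_on hT0n
        (intervalIntegrable_const (μ := volume) (c := L / 2)) ((hxc l).intervalIntegrable _ _)
        (fun τ hτ => by
          have hτ0 : (0:ℝ) ≤ τ := le_trans (hT0 T0 (le_refl T0)).2 hτ.1
          rw [max_eq_left hτ0]
          exact (hT0 τ hτ.1).1.le)
      rw [intervalIntegral.integral_const, smul_eq_mul] at hc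
      have : T0 + (n:ℝ) - T0 = (n:ℝ) := by ring
      rw [this] at hc
      exact hc
    have hub := hFub l (T0 + n)
    rw [div_lt_iff₀ (by linarith : (0:ℝ) < L / 2)] at hn
    linarith
  -- conclusion
  have hfinal : ∀ k, sInf k = s 0 k *
      Real.exp (-(η / (η + γ)) * ∑ l, W l k * (s 0 l - sInf l + x 0 l)) := by
    intro k
    have hsl : Tendsto (fun t => s 0 k * Real.exp (-(η * ∑ l, W l k * F l t))) atTop
        (nhds (s 0 k * Real.exp (-(η * ∑ l, W l k * J l)))) := by
      apply Tendsto.const_mul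
      apply (Real.continuous_exp.tendsto _).comp
      apply Tendsto.neg
      apply Tendsto.const_mul
      exact tendsto_finset_sum _ (fun l _ => (hJlim l).const_mul (W l k))
    have hsl2 : Tendsto (fun t => s t k) atTop
        (nhds (s 0 k * Real.exp (-(η * ∑ l, W l k * J l)))) := by
      apply hsl.congr'
      filter_upwards [eventually_ge_atTop (0:ℝ)] with t ht
      exact (hsForm k t ht).symm
    have heq := tendsto_nhds_unique (hlim k) hsl2
    rw [heq]
    congr 2
    have hexp : (η + γ) * ∑ l, W l k * J l = ∑ l, W l k * (s 0 l - sInf l + x 0 l) := by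
      rw [Finset.mul_sum]
      apply Finset.sum_congr rfl
      intro l _
      have h := hJval l
      linear_combination (W l k) * h
    have hne : (η + γ) ≠ 0 := ne_of_gt hlam
    field_simp
    linear_combination (-1) * hexp
  exact hfinal
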